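/- Assume K ≥ 2, L ≥ 1 and 0 < c < 1/((K+1)² · (log(K+1))²). Then for every item i and every item l with l ≠ i and l ∉ { P i k : k : Fin K }, the truncated personalized PageRank value satisfies Ŝ_i l < (1−c) · c / (D · log(K+1)). -/

import Mathlib

open Finset Matrix

/-- The normalizing constant `D = ∑_{r=1}^{K} 1 / log (r+1)`. -/
noncomputable def Dconst (K : ℕ) : ℝ := ∑ r ∈ Finset.Icc 1 K, 1 / Real.log ((r : ℝ) + 1)

/-- The weighted adjacency matrix of the recommendation network: `A i j = 1 / log (k+2)` if
`P i k = j` for some (necessarily unique, by injectivity) rank `k : Fin K`, and `0` otherwise. -/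
noncomputable def adj {n K : ℕ} (P : Fin n → Fin K → Fin n) :
    Matrix (Fin n) (Fin n) ℝ := fun i j =>
  ∑ k : Fin K, if P i k = j then 1 / Real.log (((k : ℕ) : ℝ) + 2) else 0

/-- The row-normalized adjacency matrix `Ã = D⁻¹ • A`. -/
noncomputable def normAdj {n K : ℕ} (P : Fin n → Fin K → Fin n) :
    Matrix (Fin n) (Fin n) ℝ :=
  (Dconst K)⁻¹ • adj P

/-- The truncated personalized PageRank vector
`Ŝ_i = (1-c) • ((∑_{k=0}^{L} (c • Ãᵀ)^k) *ᵥ e_i)`. -/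
noncomputable def pprTrunc {n K : ℕ} (P : Fin n → Fin K → Fin n) (c : ℝ) (L : ℕ)
    (i : Fin n) : Fin n → ℝ :=
  (1 - c) • ((∑ k ∈ Finset.range (L + 1), (c • (normAdj P)ᵀ) ^ k) *ᵥ Pi.single i 1)

lemma Dconst_pos {K : ℕ} (hK : 1 ≤ K) : 0 < Dconst K := by
  apply Finset.sum_pos
  · intro r hr
    simp only [Finset.mem_Icc] at hr
    have h1 : (1 : ℝ) < (r : ℝ) + 1 := by
      have : (1 : ℝ) ≤ (r : ℝ) := by exact_mod_cast hr.1
      linarith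
    have := Real.log_pos h1
    positivity
  · exact ⟨1, by simp [Finset.mem_Icc, hK]⟩

lemma adj_nonneg {n K : ℕ} (P : Fin n → Fin K → Fin n) (i j : Fin n) : 0 ≤ adj P i j := by
  apply Finset.sum_nonneg
  intro k _
  split
  · have hk : (0:ℝ) ≤ ((k : ℕ) : ℝ) := Nat.cast_nonneg _
    have h : (0 : ℝ) ≤ Real.log (((k : ℕ) : ℝ) + 2) := Real.log_nonneg (by linarith)
    exact one_div_nonneg.mpr h
  · exact le_refl 0

lemma adj_le {n K : ℕ} (P : Fin n → Fin K → Fin n)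
    (hinj : ∀ i, Function.Injective (P i)) (i j : Fin n) :
    adj P i j ≤ 1 / Real.log 2 := by
  have hlog2 : (0 : ℝ) < Real.log 2 := Real.log_pos (by norm_num)
  have step1 : adj P i j ≤ ∑ k : Fin K, if P i k = j then 1 / Real.log 2 else 0 := by
    apply Finset.sum_le_sum
    intro k _
    split
    · apply one_div_le_one_div_of_le hlog2
      apply Real.log_le_log (by norm_num)
      have : (0:ℝ) ≤ ((k : ℕ) : ℝ) := by positivity
      linarith
    · exact le_refl 0
  refine step1.trans ?_
  rw [← Finset.sum_filter]
  rw [Finset.sum_const, nsmul_eq_mul]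
  have hcard : (Finset.filter (fun k => P i k = j) Finset.univ).card ≤ 1 := by
    rw [Finset.card_le_one]
    intro a ha b hb
    simp only [Finset.mem_filter] at ha hb
    exact hinj i (ha.2.trans hb.2.symm)
  calc ((Finset.filter (fun k => P i k = j) Finset.univ).card : ℝ) * (1 / Real.log 2)
      ≤ 1 * (1 / Real.log 2) := by
        apply mul_le_mul_of_nonneg_right _ (by positivity)
        exact_mod_cast hcard
    _ = 1 / Real.log 2 := one_mul _

lemma adj_rowSum {n K : ℕ} (P : Fin n → Fin K → Fin n) (i : Fin n) :
    ∑ j, adj P i j = Dconst K := by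
  unfold adj Dconst
  rw [Finset.sum_comm]
  have h1 : ∀ k : Fin K, (∑ j, if P i k = j then 1 / Real.log (((k : ℕ) : ℝ) + 2) else 0)
      = 1 / Real.log (((k : ℕ) : ℝ) + 2) := by
    intro k
    rw [Finset.sum_ite_eq]
    exact if_pos (Finset.mem_univ _)
  simp_rw [h1]
  rw [Fin.sum_univ_eq_sum_range (fun k => 1 / Real.log ((k : ℝ) + 2))]
  rw [← Finset.Ico_add_one_right_eq_Icc, Finset.sum_Ico_eq_sum_range]
  apply Finset.sum_congr rfl
  intro x _
  push_cast
  ring_nf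

lemma normAdj_nonneg {n K : ℕ} (P : Fin n → Fin K → Fin n) (hK : 1 ≤ K) (i j : Fin n) :
    0 ≤ normAdj P i j := by
  unfold normAdj
  have := Dconst_pos hK
  have := adj_nonneg P i j
  simp only [Matrix.smul_apply, smul_eq_mul]
  positivity

lemma normAdj_le {n K : ℕ} (P : Fin n → Fin K → Fin n) (hK : 1 ≤ K)
    (hinj : ∀ i, Function.Injective (P i)) (i j : Fin n) :
    normAdj P i j ≤ (Dconst K)⁻¹ * (1 / Real.log 2) := by
  unfold normAdj
  simp only [Matrix.smul_apply, smul_eq_mul]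
  apply mul_le_mul_of_nonneg_left (adj_le P hinj i j)
  exact inv_nonneg.mpr (Dconst_pos hK).le

lemma normAdj_rowSum {n K : ℕ} (P : Fin n → Fin K → Fin n) (hK : 1 ≤ K) (i : Fin n) :
    ∑ j, normAdj P i j = 1 := by
  unfold normAdj
  simp only [Matrix.smul_apply, smul_eq_mul]
  rw [← Finset.mul_sum, adj_rowSum]
  exact inv_mul_cancel₀ (Dconst_pos hK).ne'

lemma normAdj_pow_nonneg {n K : ℕ} (P : Fin n → Fin K → Fin n) (hK : 1 ≤ K) (m : ℕ)
    (i j : Fin n) : 0 ≤ ((normAdj P) ^ m) i j := by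
  induction m generalizing i j with
  | zero =>
    simp only [pow_zero, Matrix.one_apply]
    split <;> norm_num
  | succ m ih =>
    rw [pow_succ, Matrix.mul_apply]
    exact Finset.sum_nonneg fun t _ => mul_nonneg (ih i t) (normAdj_nonneg P hK t j)

lemma normAdj_pow_rowSum {n K : ℕ} (P : Fin n → Fin K → Fin n) (hK : 1 ≤ K) (m : ℕ)
    (i : Fin n) : ∑ j, ((normAdj P) ^ m) i j = 1 := by
  induction m generalizing i with
  | zero =>
    simp [Matrix.one_apply]
  | succ m ih =>
    simp_rw [pow_succ, Matrix.mul_apply]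
    rw [Finset.sum_comm]
    have : ∀ t, (∑ j, ((normAdj P) ^ m) i t * normAdj P t j)
        = ((normAdj P) ^ m) i t := by
      intro t
      rw [← Finset.mul_sum, normAdj_rowSum P hK, mul_one]
    simp_rw [this]
    exact ih i

lemma normAdj_pow_le {n K : ℕ} (P : Fin n → Fin K → Fin n) (hK : 1 ≤ K)
    (hinj : ∀ i, Function.Injective (P i)) (m : ℕ) (i j : Fin n) :
    ((normAdj P) ^ (m + 1)) i j ≤ (Dconst K)⁻¹ * (1 / Real.log 2) := by
  rw [pow_succ, Matrix.mul_apply]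
  calc ∑ t, ((normAdj P) ^ m) i t * normAdj P t j
      ≤ ∑ t, ((normAdj P) ^ m) i t * ((Dconst K)⁻¹ * (1 / Real.log 2)) := by
        apply Finset.sum_le_sum
        intro t _
        exact mul_le_mul_of_nonneg_left (normAdj_le P hK hinj t j)
          (normAdj_pow_nonneg P hK m i t)
    _ = (Dconst K)⁻¹ * (1 / Real.log 2) := by
        rw [← Finset.sum_mul, normAdj_pow_rowSum P hK, one_mul]

lemma pprTrunc_eq {n K : ℕ} (P : Fin n → Fin K → Fin n) (c : ℝ) (L : ℕ) (i l : Fin n) :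
    pprTrunc P c L i l
      = (1 - c) * ∑ k ∈ Finset.range (L + 1), c ^ k * ((normAdj P) ^ k) i l := by
  unfold pprTrunc
  simp only [Pi.smul_apply, smul_eq_mul, Matrix.mulVec_single, Matrix.sum_apply,
    smul_pow, ← Matrix.transpose_pow, Matrix.smul_apply, Matrix.transpose_apply, mul_one]
  simp [Matrix.sum_apply, ← Matrix.transpose_pow, Matrix.transpose_apply]

/-- Upper bound on the truncated personalized PageRank value of an item that is neither the
source item nor one of the provider's recommendations:
`Ŝ_i l < (1-c) · c / (D · log (K+1))`. -/
theorem pprTrunc_upper_bound_unrecommended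
    (n K : ℕ) (hK : 2 ≤ K) (P : Fin n → Fin K → Fin n)
    (hinj : ∀ i, Function.Injective (P i))
    (hne : ∀ i k, P i k ≠ i)
    (c : ℝ) (L : ℕ) (hL : 1 ≤ L)
    (hc0 : 0 < c)
    (hc1 : c < 1 / (((K : ℝ) + 1) ^ 2 * Real.log ((K : ℝ) + 1) ^ 2))
    (i l : Fin n) (hli : l ≠ i) (hl : ∀ k : Fin K, P i k ≠ l) :
    pprTrunc P c L i l < (1 - c) * c / (Dconst K * Real.log ((K : ℝ) + 1)) := by
  have hK1 : 1 ≤ K := le_trans (by norm_num) hK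
  have hD : 0 < Dconst K := Dconst_pos hK1
  have hlog2 : (0 : ℝ) < Real.log 2 := Real.log_pos (by norm_num)
  -- basic facts about K
  have hx3 : (3 : ℝ) ≤ (K : ℝ) + 1 := by
    have : (2 : ℝ) ≤ (K : ℝ) := by exact_mod_cast hK
    linarith
  have hlogK : (1 : ℝ) < Real.log ((K : ℝ) + 1) := by
    rw [Real.lt_log_iff_exp_lt (by linarith)]
    calc Real.exp 1 < 2.7182818286 := Real.exp_one_lt_d9
      _ < 3 := by norm_num
      _ ≤ (K : ℝ) + 1 := hx3
  have hlogKpos : (0 : ℝ) < Real.log ((K : ℝ) + 1) := by linarith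
  -- c is small
  have hbig : (9 : ℝ) ≤ ((K : ℝ) + 1) ^ 2 * Real.log ((K : ℝ) + 1) ^ 2 := by
    have h9 : (9 : ℝ) ≤ ((K : ℝ) + 1) ^ 2 := by nlinarith
    have h1 : (1 : ℝ) ≤ Real.log ((K : ℝ) + 1) ^ 2 := by nlinarith
    nlinarith
  have hc9 : c < 1 / 9 := lt_of_lt_of_le hc1 (by
    apply one_div_le_one_div_of_le (by norm_num) hbig)
  -- key scalar inequality: c * log(K+1) < (1 - c) * log 2
  have hkey : c * Real.log ((K : ℝ) + 1) < (1 - c) * Real.log 2 := by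
    have h1 : c * Real.log ((K : ℝ) + 1) < 1 / 9 := by
      have : c < 1 / (((K : ℝ) + 1) ^ 2 * Real.log ((K : ℝ) + 1) ^ 2) := hc1
      have hd : (0 : ℝ) < ((K : ℝ) + 1) ^ 2 * Real.log ((K : ℝ) + 1) ^ 2 := by positivity
      calc c * Real.log ((K : ℝ) + 1)
          < (1 / (((K : ℝ) + 1) ^ 2 * Real.log ((K : ℝ) + 1) ^ 2)) * Real.log ((K : ℝ) + 1) := by
            apply mul_lt_mul_of_pos_right hc1 hlogKpos
        _ = 1 / (((K : ℝ) + 1) ^ 2 * Real.log ((K : ℝ) + 1)) := by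
            field_simp
        _ ≤ 1 / 9 := by
            apply one_div_le_one_div_of_le (by norm_num)
            nlinarith
    have h2 : (1 / 9 : ℝ) < (1 - c) * Real.log 2 := by
      have hl2 : (0.6931471803 : ℝ) < Real.log 2 := Real.log_two_gt_d9
      nlinarith
    linarith
  -- entry bound
  set B : ℝ := (Dconst K)⁻¹ * (1 / Real.log 2) with hB
  have hBpos : 0 < B := by positivity
  -- rewrite pprTrunc
  rw [pprTrunc_eq]
  have hc1' : c < 1 := by linarith
  -- the sum: first two terms vanish
  have hzero0 : ((normAdj P) ^ 0) i l = 0 := by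
    simp [Matrix.one_apply, hli.symm]
  have hzero1 : ((normAdj P) ^ 1) i l = 0 := by
    rw [pow_one]
    unfold normAdj
    simp only [Matrix.smul_apply, smul_eq_mul]
    have : adj P i l = 0 := by
      unfold adj
      apply Finset.sum_eq_zero
      intro k _
      simp [hl k]
    rw [this, mul_zero]
  -- bound the sum
  have hsum : ∑ k ∈ Finset.range (L + 1), c ^ k * ((normAdj P) ^ k) i l
      ≤ B * (c ^ 2 / (1 - c)) := by
    calc ∑ k ∈ Finset.range (L + 1), c ^ k * ((normAdj P) ^ k) i l
        ≤ ∑ k ∈ Finset.range (L + 1), (if k < 2 then 0 else c ^ k * B) := by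
          apply Finset.sum_le_sum
          intro k _
          by_cases hk : k < 2
          · interval_cases k
            · rw [hzero0]; simp
            · simp [hzero1]
          · simp only [if_neg hk]
            obtain ⟨m, rfl⟩ : ∃ m, k = m + 1 := ⟨k - 1, by omega⟩
            exact mul_le_mul_of_nonneg_left (normAdj_pow_le P hK1 hinj m i l)
              (by positivity)
      _ = ∑ k ∈ Finset.filter (fun k => ¬ k < 2) (Finset.range (L + 1)), c ^ k * B := by
          rw [Finset.sum_filter]
          apply Finset.sum_congr rfl
          intro k _
          by_cases hk : k < 2 <;> simp [hk]
      _ = ∑ k ∈ Finset.Ico 2 (L + 1), c ^ k * B := by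
          apply Finset.sum_congr _ (fun _ _ => rfl)
          ext k
          simp only [Finset.mem_filter, Finset.mem_range, Finset.mem_Ico, not_lt]
          omega
      _ ≤ c ^ 2 / (1 - c) * B := by
          rw [← Finset.sum_mul]
          apply mul_le_mul_of_nonneg_right _ hBpos.le
          rw [Finset.sum_Ico_eq_sum_range]
          have : ∀ k ∈ Finset.range (L + 1 - 2), c ^ (2 + k) = c ^ 2 * c ^ k := by
            intro k _; rw [pow_add]
          rw [Finset.sum_congr rfl this, ← Finset.mul_sum]
          rw [div_eq_mul_inv]
          apply mul_le_mul_of_nonneg_left _ (by positivity)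
          -- geometric sum bound
          have hgeom : (∑ j ∈ Finset.range (L + 1 - 2), c ^ j) * (1 - c) ≤ 1 := by
            have := geom_sum_mul c (L + 1 - 2)
            have hpow : 0 ≤ c ^ (L + 1 - 2) := by positivity
            nlinarith [this]
          rw [← one_div, le_div_iff₀ (by linarith)]
          linarith [hgeom]
      _ = B * (c ^ 2 / (1 - c)) := by ring
  -- final strict inequality
  have hfinal : (1 - c) * (B * (c ^ 2 / (1 - c))) < (1 - c) * c / (Dconst K * Real.log ((K : ℝ) + 1)) := by
    have h1c : (0:ℝ) < 1 - c := by linarith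
    have heq : (1 - c) * (B * (c ^ 2 / (1 - c))) = c ^ 2 / (Dconst K * Real.log 2) := by
      rw [hB]
      field_simp
    rw [heq]
    rw [div_lt_div_iff₀ (by positivity) (by positivity)]
    have : c ^ 2 * Real.log ((K:ℝ)+1) < (1 - c) * c * Real.log 2 := by
      have := mul_lt_mul_of_pos_left hkey hc0
      nlinarith [hkey, hc0]
    nlinarith [hD, this]
  calc (1 - c) * ∑ k ∈ Finset.range (L + 1), c ^ k * ((normAdj P) ^ k) i l
      ≤ (1 - c) * (B * (c ^ 2 / (1 - c))) := by
        apply mul_le_mul_of_nonneg_left hsum (by linarith)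
    _ < (1 - c) * c / (Dconst K * Real.log ((K : ℝ) + 1)) := hfinal
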